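/- Let n be a positive real number. If h : (0,n) → ℝ satisfies h(x+y) = h(x) + h(y) for all x,y ∈ (0,n) with x+y ∈ (0,n), and h is continuous at one point, then there exists c ∈ ℝ such that h(x) = c·x for all x ∈ (0,n). -/

import Mathlib

open Set Filter Topology

theorem restricted_cauchy_linear
    (n : ℝ) (hn : 0 < n) (h : ℝ → ℝ)
    (hadd : ∀ x ∈ Set.Ioo 0 n, ∀ y ∈ Set.Ioo 0 n, x + y ∈ Set.Ioo 0 n →
      h (x + y) = h x + h y)
    (hcont : ∃ x₀ ∈ Set.Ioo 0 n, ContinuousWithinAt h (Set.Ioo 0 n) x₀) :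
    ∃ c : ℝ, ∀ x ∈ Set.Ioo 0 n, h x = c * x := by
  obtain ⟨x₀, hx₀, hc⟩ := hcont
  -- Step 1 : h t → 0 as t → 0⁺
  have key : Tendsto h (𝓝[>] (0:ℝ)) (𝓝 0) := by
    have t1 : Tendsto (fun t => x₀ + t) (𝓝[>] (0:ℝ)) (𝓝[Set.Ioo 0 n] x₀) := by
      rw [tendsto_nhdsWithin_iff]
      constructor
      · have : Tendsto (fun t : ℝ => x₀ + t) (𝓝 0) (𝓝 (x₀ + 0)) :=
          (continuous_const.add continuous_id).tendsto 0
        simpa using this.mono_left nhdsWithin_le_nhds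
      · filter_upwards [Ioo_mem_nhdsGT_of_mem (⟨le_refl _, by linarith [hx₀.2]⟩ :
          (0:ℝ) ∈ Ico 0 (n - x₀))] with t ht
        exact ⟨by linarith [hx₀.1, ht.1], by linarith [ht.2]⟩
    have t2 : Tendsto (fun t => h (x₀ + t) - h x₀) (𝓝[>] (0:ℝ)) (𝓝 0) := by
      have := (hc.tendsto.comp t1).sub
        (tendsto_const_nhds : Tendsto (fun _ : ℝ => h x₀) (𝓝[>] (0:ℝ)) (𝓝 (h x₀)))
      simpa using this
    refine t2.congr' ?_
    filter_upwards [Ioo_mem_nhdsGT_of_mem (⟨le_refl _, by linarith [hx₀.2]⟩ :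
        (0:ℝ) ∈ Ico 0 (n - x₀))] with t ht
    have htI : t ∈ Set.Ioo 0 n := ⟨ht.1, by linarith [ht.2, hx₀.1]⟩
    have hsum : x₀ + t ∈ Set.Ioo 0 n := ⟨by linarith [hx₀.1, ht.1], by linarith [ht.2]⟩
    rw [hadd x₀ hx₀ t htI hsum]; ring
  -- Step 2 : h is continuous at every point of (0,n)
  have cont : ∀ y ∈ Set.Ioo 0 n, ContinuousAt h y := by
    intro y hy
    rw [continuousAt_iff_continuous_left'_right']
    constructor
    · -- left
      have t1 : Tendsto (fun z => y - z) (𝓝[<] y) (𝓝[>] (0:ℝ)) := by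
        rw [tendsto_nhdsWithin_iff]
        constructor
        · have : Tendsto (fun z : ℝ => y - z) (𝓝 y) (𝓝 (y - y)) :=
            (continuous_const.sub continuous_id).tendsto y
          simpa using this.mono_left nhdsWithin_le_nhds
        · filter_upwards [self_mem_nhdsWithin] with z hz
          exact sub_pos.2 (mem_Iio.1 hz)
      have t2 : Tendsto (fun z => h y - h (y - z)) (𝓝[<] y) (𝓝 (h y)) := by
        have := (tendsto_const_nhds :
          Tendsto (fun _ : ℝ => h y) (𝓝[<] y) (𝓝 (h y))).sub (key.comp t1)
        simpa using this
      refine (t2.congr' ?_ : Tendsto h (𝓝[<] y) (𝓝 (h y)))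
      filter_upwards [Ioo_mem_nhdsLT_of_mem (⟨hy.1, le_refl _⟩ : y ∈ Ioc 0 y)] with z hz
      have hzI : z ∈ Set.Ioo 0 n := ⟨hz.1, lt_trans hz.2 hy.2⟩
      have hdI : y - z ∈ Set.Ioo 0 n := ⟨by linarith [hz.2], by linarith [hy.2, hz.1]⟩
      have heq : z + (y - z) = y := by ring
      have := hadd z hzI (y - z) hdI (by rw [heq]; exact hy)
      rw [heq] at this
      rw [this]; ring
    · -- right
      have t1 : Tendsto (fun z => z - y) (𝓝[>] y) (𝓝[>] (0:ℝ)) := by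
        rw [tendsto_nhdsWithin_iff]
        constructor
        · have : Tendsto (fun z : ℝ => z - y) (𝓝 y) (𝓝 (y - y)) :=
            (continuous_id.sub continuous_const).tendsto y
          simpa using this.mono_left nhdsWithin_le_nhds
        · filter_upwards [self_mem_nhdsWithin] with z hz
          exact sub_pos.2 (mem_Ioi.1 hz)
      have t2 : Tendsto (fun z => h y + h (z - y)) (𝓝[>] y) (𝓝 (h y)) := by
        have := (tendsto_const_nhds :
          Tendsto (fun _ : ℝ => h y) (𝓝[>] y) (𝓝 (h y))).add (key.comp t1)
        simpa using this
      refine (t2.congr' ?_ : Tendsto h (𝓝[>] y) (𝓝 (h y)))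
      filter_upwards [Ioo_mem_nhdsGT_of_mem (⟨le_refl _, hy.2⟩ : y ∈ Ico y n)] with z hz
      have hdI : z - y ∈ Set.Ioo 0 n := ⟨by linarith [hz.1], by linarith [hz.2, hy.1]⟩
      have heq : y + (z - y) = z := by ring
      have := hadd y hy (z - y) hdI (by rw [heq]; exact ⟨lt_trans hy.1 hz.1, hz.2⟩)
      rw [heq] at this
      rw [this]
  -- Step 3 : natural homogeneity
  have hnat : ∀ x ∈ Set.Ioo 0 n, ∀ k : ℕ, 0 < k → (k:ℝ) * x < n → h ((k:ℝ) * x) = k * h x := by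
    intro x hx k
    induction k with
    | zero => intro hk; exact absurd hk (lt_irrefl 0)
    | succ m ih =>
      intro _ hlt
      rcases Nat.eq_zero_or_pos m with hm | hm
      · subst hm; norm_num
      · have hm0 : (0:ℝ) < m := by exact_mod_cast hm
        have hmx : (m:ℝ) * x ∈ Set.Ioo 0 n := by
          constructor
          · exact mul_pos hm0 hx.1
          · have : (m:ℝ) * x < ((m:ℝ)+1) * x := by nlinarith [hx.1]
            push_cast at hlt
            linarith
        have hsum : (m:ℝ) * x + x ∈ Set.Ioo 0 n := by
          push_cast at hlt ⊢
          constructor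
          · nlinarith [hx.1, hmx.1]
          · nlinarith
        have heq := hadd ((m:ℝ)*x) hmx x hx hsum
        push_cast
        rw [show ((m:ℝ)+1)*x = (m:ℝ)*x + x by ring, heq, ih hm hmx.2]
        ring
  -- Step 4 : rational homogeneity (p/m with p,m positive naturals)
  have hrat : ∀ x ∈ Set.Ioo 0 n, ∀ p m : ℕ, 0 < p → 0 < m → ((p:ℝ)/m) * x < n →
      h (((p:ℝ)/m) * x) = ((p:ℝ)/m) * h x := by
    intro x hx p m hp hm hlt
    have hm' : (0:ℝ) < m := by exact_mod_cast hm
    have h1m : (1:ℝ) ≤ m := by exact_mod_cast hm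
    set t := x / m with ht
    have htI : t ∈ Set.Ioo 0 n := by
      constructor
      · rw [ht]; exact div_pos hx.1 hm'
      · have : t ≤ x := by
          rw [ht, div_le_iff₀ hm']
          nlinarith [hx.1]
        linarith [hx.2]
    have hmt : (m:ℝ) * t = x := by rw [ht]; field_simp
    have h1 : h x = m * h t := by
      rw [← hmt]
      exact hnat t htI m hm (by rw [hmt]; exact hx.2)
    have hpt : (p:ℝ) * t = ((p:ℝ)/m) * x := by rw [ht]; field_simp
    have h2 : h ((p:ℝ) * t) = p * h t := hnat t htI p hp (by rw [hpt]; exact hlt)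
    rw [← hpt, h2]
    have : h t = h x / m := by rw [h1]; field_simp
    rw [this]
    field_simp
  -- Step 5 : conclude
  set a := n / 2 with ha
  have ha0 : 0 < a := by rw [ha]; linarith
  have haI : a ∈ Set.Ioo 0 n := ⟨ha0, by rw [ha]; linarith⟩
  refine ⟨h a / a, fun x hx => ?_⟩
  have hxa : 0 < x / a := div_pos hx.1 ha0
  have hchoice : ∀ k : ℕ, ∃ q : ℚ, (max (x/a - 1/(k+1)) (x/a/2) : ℝ) < q ∧ (q:ℝ) < x/a := by
    intro k
    apply exists_rat_btwn
    apply max_lt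
    · have : (0:ℝ) < 1/((k:ℝ)+1) := by positivity
      linarith
    · linarith
  choose q hq1 hq2 using hchoice
  have hqpos : ∀ k, (0:ℝ) < q k := fun k =>
    lt_trans (lt_of_lt_of_le (half_pos hxa) (le_max_right _ _)) (hq1 k)
  have hqa_lt : ∀ k, (q k : ℝ) * a < x := fun k => (lt_div_iff₀ ha0).1 (hq2 k)
  have hmem : ∀ k, (q k : ℝ) * a ∈ Set.Ioo 0 n :=
    fun k => ⟨mul_pos (hqpos k) ha0, lt_trans (hqa_lt k) hx.2⟩
  -- homogeneity along the sequence
  have hhom : ∀ k, h ((q k : ℝ) * a) = (q k : ℝ) * h a := by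
    intro k
    have hq0 : (0:ℚ) < q k := by exact_mod_cast hqpos k
    have hnum : 0 < (q k).num := Rat.num_pos.2 hq0
    have hcast : (((q k).num.toNat : ℝ)) / (((q k).den : ℕ) : ℝ) = (q k : ℝ) := by
      have h1 : (((q k).num.toNat : ℤ) : ℝ) = ((q k).num : ℝ) := by
        exact_mod_cast congrArg (fun z : ℤ => (z : ℝ)) (Int.toNat_of_nonneg hnum.le)
      have h2 : ((q k).num.toNat : ℝ) = ((q k).num : ℝ) := by push_cast at h1 ⊢; exact h1
      rw [h2, Rat.cast_def]
    have hplt : (((q k).num.toNat : ℝ) / ((q k).den : ℝ)) * a < n := by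
      rw [hcast]; exact (hmem k).2
    have := hrat a haI (q k).num.toNat (q k).den
      (by omega) (q k).pos hplt
    rw [hcast] at this
    exact this
  -- limits
  have hqlim : Tendsto (fun k : ℕ => (q k : ℝ)) atTop (𝓝 (x/a)) := by
    have hlow : Tendsto (fun k : ℕ => x/a - 1/((k:ℝ)+1)) atTop (𝓝 (x/a)) := by
      have := tendsto_one_div_add_atTop_nhds_zero_nat (𝕜 := ℝ)
      have := (tendsto_const_nhds :
        Tendsto (fun _ : ℕ => x/a) atTop (𝓝 (x/a))).sub this
      simpa using this
    refine tendsto_of_tendsto_of_tendsto_of_le_of_le hlow tendsto_const_nhds ?_ ?_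
    · intro k
      exact le_of_lt (lt_of_le_of_lt (le_max_left _ _) (hq1 k))
    · intro k
      exact (hq2 k).le
  have hxlim : Tendsto (fun k : ℕ => (q k : ℝ) * a) atTop (𝓝 x) := by
    have := hqlim.mul_const a
    rwa [div_mul_cancel₀ _ (ne_of_gt ha0)] at this
  have lim1 : Tendsto (fun k : ℕ => h ((q k : ℝ) * a)) atTop (𝓝 (h x)) :=
    ((cont x hx).tendsto).comp hxlim
  have lim2 : Tendsto (fun k : ℕ => h ((q k : ℝ) * a)) atTop (𝓝 (x/a * h a)) := by
    have := hqlim.mul_const (h a)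
    refine this.congr fun k => (hhom k).symm
  have := tendsto_nhds_unique lim1 lim2
  rw [this]
  field_simp
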